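/- If V = I + Σ_{i=1}^{n} z_i z_i^T where each z_i ∈ R^p satisfies ‖z_i‖₂² ≤ c², then det(V) ≤ (1 + n c²/p)^p. -/

import Mathlib

open Matrix Finset

lemma sum_eigenvalues_eq_trace' {p : ℕ} {A : Matrix (Fin p) (Fin p) ℝ}
    (hA : A.IsHermitian) : ∑ i, hA.eigenvalues i = A.trace := by
  rw [hA.trace_eq_sum_eigenvalues]
  simp

/-- If `V = I + ∑_{i=1}^n z_i z_iᵀ` with each `‖z_i‖₂² ≤ c²`, then
`det V ≤ (1 + n c² / p)^p`. -/
theorem det_one_add_sum_outer_le {p n : ℕ} (hp : 0 < p) (c : ℝ) (hc : 0 < c)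
    (z : Fin n → (Fin p → ℝ)) (hz : ∀ i, z i ⬝ᵥ z i ≤ c ^ 2)
    (V : Matrix (Fin p) (Fin p) ℝ)
    (hV : V = 1 + ∑ i : Fin n, vecMulVec (z i) (z i)) :
    V.det ≤ (1 + n * c ^ 2 / p) ^ p := by
  have hcol : ∀ i : Fin n, vecMulVec (z i) (z i)
      = replicateCol (Fin 1) (z i) * (replicateCol (Fin 1) (z i))ᴴ := by
    intro i
    rw [vecMulVec_eq (Fin 1), Matrix.conjTranspose_replicateCol]
    simp
    rfl
  have hpsd : V.PosSemidef := by
    rw [hV]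
    refine Matrix.PosSemidef.add Matrix.PosSemidef.one ?_
    refine Finset.sum_induction _ Matrix.PosSemidef (fun a b ha hb => ha.add hb)
      Matrix.PosSemidef.zero fun i _ => ?_
    rw [hcol i]
    exact Matrix.posSemidef_self_mul_conjTranspose _
  have hH : V.IsHermitian := hpsd.isHermitian
  set lam := hH.eigenvalues with hlam
  have hnn : ∀ i, 0 ≤ lam i := fun i => hpsd.eigenvalues_nonneg i
  -- trace bound
  have htr : V.trace ≤ p + n * c ^ 2 := by
    rw [hV, Matrix.trace_add, Matrix.trace_one, Matrix.trace_sum]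
    have : ∀ i : Fin n, (vecMulVec (z i) (z i)).trace = z i ⬝ᵥ z i := by
      intro i
      rw [vecMulVec_eq (Fin 1), Matrix.trace_replicateCol_mul_replicateRow]
    simp only [this, Fintype.card_fin]
    have : ∑ i : Fin n, z i ⬝ᵥ z i ≤ ∑ _i : Fin n, c ^ 2 :=
      Finset.sum_le_sum fun i _ => hz i
    simpa using this
  have hsum : ∑ i, lam i = V.trace := sum_eigenvalues_eq_trace' hH
  have hdet : V.det = ∏ i, lam i := by
    have := hH.det_eq_prod_eigenvalues
    simpa using this
  -- AM-GM
  have hw : ∑ _i : Fin p, (p : ℝ)⁻¹ = 1 := by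
    simp [Finset.sum_const, mul_inv_cancel₀ (Nat.cast_ne_zero.mpr hp.ne' : (p:ℝ) ≠ 0)]
  have hAMGM := Real.geom_mean_le_arith_mean_weighted Finset.univ
    (fun _ : Fin p => (p : ℝ)⁻¹) lam (fun i _ => by positivity) hw (fun i _ => hnn i)
  have hrhs : ∑ i : Fin p, (p : ℝ)⁻¹ * lam i ≤ 1 + n * c ^ 2 / p := by
    rw [← Finset.mul_sum, hsum]
    have hp' : (0:ℝ) < p := by exact_mod_cast hp
    rw [inv_mul_le_iff₀ hp', mul_comm]
    calc V.trace ≤ p + n * c ^ 2 := htr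
      _ = (1 + n * c ^ 2 / p) * p := by field_simp
  have hgm_nn : 0 ≤ ∏ i, lam i ^ ((p : ℝ)⁻¹) :=
    Finset.prod_nonneg fun i _ => Real.rpow_nonneg (hnn i) _
  have key : (∏ i, lam i ^ ((p : ℝ)⁻¹)) ^ p ≤ (1 + n * c ^ 2 / p) ^ p :=
    pow_le_pow_left₀ hgm_nn (hAMGM.trans hrhs) p
  have hpow : (∏ i, lam i ^ ((p : ℝ)⁻¹)) ^ p = ∏ i, lam i := by
    rw [← Finset.prod_pow]
    refine Finset.prod_congr rfl fun i _ => ?_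
    rw [← Real.rpow_natCast (lam i ^ ((p:ℝ)⁻¹)) p, ← Real.rpow_mul (hnn i),
      inv_mul_cancel₀ (Nat.cast_ne_zero.mpr hp.ne' : (p:ℝ) ≠ 0), Real.rpow_one]
  rw [hdet, ← hpow]
  exact key
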